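/- Let P₁ be the uniform distribution on [0, 1/2] and n ∈ ℕ. Then the set {(2i−1)/(4n) : 1 ≤ i ≤ n} is an optimal set of n-means for P₁, with quantization error V_n(P₁) = 1/(48n²). -/

import Mathlib

open MeasureTheory Set Filter Real
open scoped ENNReal

/-- Distortion error of a finite set of quantizers `γ` for the measure `P`. -/
noncomputable def distortion (P : Measure ℝ) (γ : Finset ℝ) : ℝ :=
  ∫ x, (⨅ c : γ, (x - (c : ℝ)) ^ 2) ∂P

/-- The `n`-th quantization error of `P`. -/
noncomputable def quantErr (P : Measure ℝ) (n : ℕ) : ℝ :=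
  sInf {v : ℝ | ∃ γ : Finset ℝ, γ.Nonempty ∧ γ.card ≤ n ∧ v = distortion P γ}

/-- `γ` is an optimal set of `n`-means for `P`. -/
def IsOptimalSet (P : Measure ℝ) (n : ℕ) (γ : Finset ℝ) : Prop :=
  γ.Nonempty ∧ γ.card ≤ n ∧ distortion P γ = quantErr P n

/-- Uniform distribution on `[a, b]`. -/
noncomputable def unif (a b : ℝ) : Measure ℝ :=
  (ENNReal.ofReal (b - a))⁻¹ • (volume.restrict (Icc a b))

/-- The uniform discrete measure on `{2/3, 5/6, 1}`. -/
noncomputable def discD : Measure ℝ :=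
  (3 : ℝ≥0∞)⁻¹ • (Measure.dirac (2/3) + Measure.dirac (5/6) + Measure.dirac 1)

/-- Mixture `(1/2)P₁ + (1/2)P₂`. -/
noncomputable def mix (P₁ P₂ : Measure ℝ) : Measure ℝ :=
  (2 : ℝ≥0∞)⁻¹ • P₁ + (2 : ℝ≥0∞)⁻¹ • P₂

/-! ### Auxiliary definitions and lemmas -/

noncomputable def dmin (γ : Finset ℝ) (hγ : γ.Nonempty) (x : ℝ) : ℝ :=
  γ.inf' hγ (fun c => |x - c|)

lemma dmin_nonneg (γ : Finset ℝ) (hγ : γ.Nonempty) (x : ℝ) : 0 ≤ dmin γ hγ x := by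
  obtain ⟨c, hc, he⟩ := γ.exists_mem_eq_inf' hγ (fun c => |x - c|)
  rw [dmin, he]; exact abs_nonneg _

lemma dmin_continuous (γ : Finset ℝ) (hγ : γ.Nonempty) : Continuous (dmin γ hγ) := by
  apply continuous_iff_continuousAt.2
  intro x
  exact ContinuousAt.finset_inf'_apply hγ (fun c _ =>
    ((continuous_id.sub continuous_const).abs).continuousAt)

lemma g_eq (γ : Finset ℝ) (hγ : γ.Nonempty) (x : ℝ) :
    (⨅ c : γ, (x - (c : ℝ)) ^ 2) = dmin γ hγ x ^ 2 := by
  have : Nonempty γ := hγ.to_subtype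
  obtain ⟨c₀, hc₀, hmin⟩ := γ.exists_min_image (fun c => |x - c|) hγ
  have hd : dmin γ hγ x = |x - c₀| :=
    le_antisymm (Finset.inf'_le _ hc₀) (Finset.le_inf' _ _ hmin)
  rw [hd]
  rw [sq_abs]
  refine le_antisymm (ciInf_le ⟨0, ?_⟩ (⟨c₀, hc₀⟩ : γ)) (le_ciInf fun c => ?_)
  · rintro _ ⟨c, rfl⟩; positivity
  · rw [← sq_abs (x - c), ← sq_abs (x - c₀)]
    exact pow_le_pow_left₀ (abs_nonneg _) (hmin c c.2) 2

lemma g_le (γ : Finset ℝ) (hγ : γ.Nonempty) (x c : ℝ) (hc : c ∈ γ) :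
    (⨅ c : γ, (x - (c : ℝ)) ^ 2) ≤ (x - c) ^ 2 := by
  have : Nonempty γ := hγ.to_subtype
  refine ciInf_le ⟨0, ?_⟩ (⟨c, hc⟩ : γ)
  rintro _ ⟨c, rfl⟩; positivity

lemma sublevel_subset (γ : Finset ℝ) (hγ : γ.Nonempty) (t : ℝ) :
    {x : ℝ | dmin γ hγ x ≤ t} ⊆ ⋃ c ∈ γ, Icc (c - t) (c + t) := by
  intro x hx
  obtain ⟨c, hc, he⟩ := γ.exists_mem_eq_inf' hγ (fun c => |x - c|)
  simp only [mem_setOf_eq, dmin, he] at hx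
  have := abs_le.1 hx
  exact mem_biUnion hc ⟨by linarith [this.1], by linarith [this.2]⟩

lemma key_lower (γ : Finset ℝ) (hγ : γ.Nonempty) {L : ℝ} (hL : 0 < L) :
    ENNReal.ofReal (L ^ 3 / (12 * (γ.card : ℝ) ^ 2)) ≤
      ∫⁻ x in Icc 0 L, ENNReal.ofReal (dmin γ hγ x ^ 2) := by
  set μ := volume.restrict (Icc (0:ℝ) L) with hμ
  set m : ℝ := (γ.card : ℝ) with hm
  have hm1 : 1 ≤ m := by
    simp only [hm, Nat.one_le_cast]
    exact Finset.card_pos.2 hγ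
  have hm0 : 0 < m := lt_of_lt_of_le one_pos hm1
  set T : ℝ := L / (2 * m) with hT
  have hT0 : 0 < T := by positivity
  have f_nn : 0 ≤ᵐ[μ] dmin γ hγ := Eventually.of_forall (dmin_nonneg γ hγ)
  have f_mble : AEMeasurable (dmin γ hγ) μ := (dmin_continuous γ hγ).measurable.aemeasurable
  have lc := lintegral_rpow_eq_lintegral_meas_lt_mul μ f_nn f_mble (p := 2) two_pos
  have e1 : ∀ x : ℝ, ENNReal.ofReal (dmin γ hγ x ^ (2:ℝ)) = ENNReal.ofReal (dmin γ hγ x ^ 2) := by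
    intro x
    rw [show ((2:ℝ)) = ((2:ℕ):ℝ) by norm_num, Real.rpow_natCast]
  simp only [e1] at lc
  rw [lc]
  have meas_bound : ∀ t ∈ Ioc (0:ℝ) T,
      ENNReal.ofReal ((L - 2 * m * t) * t) ≤ μ {a : ℝ | t < dmin γ hγ a} * ENNReal.ofReal (t ^ (2-1:ℝ)) := by
    intro t ht
    have ht0 : 0 < t := ht.1
    rw [show ((2:ℝ)-1) = 1 by norm_num, Real.rpow_one]
    have hSm : MeasurableSet {a : ℝ | t < dmin γ hγ a} :=
      measurableSet_lt measurable_const (dmin_continuous γ hγ).measurable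
    have hrestrict : μ {a : ℝ | t < dmin γ hγ a}
        = volume ({a : ℝ | t < dmin γ hγ a} ∩ Icc 0 L) := by
      rw [hμ, Measure.restrict_apply hSm]
    have hsub : Icc (0:ℝ) L ⊆ ({a : ℝ | t < dmin γ hγ a} ∩ Icc 0 L) ∪ (⋃ c ∈ γ, Icc (c - t) (c + t)) := by
      intro x hx
      by_cases h : t < dmin γ hγ x
      · exact Or.inl ⟨h, hx⟩
      · exact Or.inr (sublevel_subset γ hγ t (not_lt.1 h))
    have hB : volume (⋃ c ∈ γ, Icc (c - t) (c + t)) ≤ ENNReal.ofReal (m * (2 * t)) := by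
      refine le_trans (measure_biUnion_finset_le γ _) ?_
      have : ∀ c ∈ γ, volume (Icc (c - t) (c + t)) = ENNReal.ofReal (2 * t) := by
        intro c _
        rw [Real.volume_Icc]
        congr 1; ring
      rw [Finset.sum_congr rfl this]
      simp only [Finset.sum_const, nsmul_eq_mul]
      rw [← ENNReal.ofReal_natCast, ← ENNReal.ofReal_mul (by positivity)]
    have hIcc : volume (Icc (0:ℝ) L) = ENNReal.ofReal L := by
      rw [Real.volume_Icc]; congr 1; ring
    have hkey : ENNReal.ofReal L ≤ volume ({a : ℝ | t < dmin γ hγ a} ∩ Icc 0 L)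
        + ENNReal.ofReal (m * (2 * t)) := by
      calc ENNReal.ofReal L = volume (Icc (0:ℝ) L) := hIcc.symm
        _ ≤ volume (({a : ℝ | t < dmin γ hγ a} ∩ Icc 0 L) ∪ (⋃ c ∈ γ, Icc (c - t) (c + t))) :=
            measure_mono hsub
        _ ≤ _ := le_trans (measure_union_le _ _) (add_le_add le_rfl hB)
    have : ENNReal.ofReal (L - m * (2 * t)) ≤ volume ({a : ℝ | t < dmin γ hγ a} ∩ Icc 0 L) := by
      rw [ENNReal.ofReal_sub _ (by positivity)]
      exact tsub_le_iff_right.2 hkey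
    calc ENNReal.ofReal ((L - 2 * m * t) * t)
        = ENNReal.ofReal (L - m * (2 * t)) * ENNReal.ofReal t := by
          have hTle : t * (2 * m) ≤ L := (le_div_iff₀ (by positivity)).1 ht.2
          rw [← ENNReal.ofReal_mul (by nlinarith)]
          congr 1; ring
      _ ≤ volume ({a : ℝ | t < dmin γ hγ a} ∩ Icc 0 L) * ENNReal.ofReal t :=
          mul_le_mul_of_nonneg_right this (by simp)
      _ = _ := by rw [hrestrict]
  have step2 : ∫⁻ t in Ioc (0:ℝ) T, ENNReal.ofReal ((L - 2 * m * t) * t) ≤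
      ∫⁻ t in Ioi (0:ℝ), μ {a : ℝ | t < dmin γ hγ a} * ENNReal.ofReal (t ^ (2-1:ℝ)) := by
    calc ∫⁻ t in Ioc (0:ℝ) T, ENNReal.ofReal ((L - 2 * m * t) * t)
        ≤ ∫⁻ t in Ioc (0:ℝ) T, μ {a : ℝ | t < dmin γ hγ a} * ENNReal.ofReal (t ^ (2-1:ℝ)) := by
          refine lintegral_mono_ae ?_
          filter_upwards [self_mem_ae_restrict measurableSet_Ioc] with t ht
          exact meas_bound t ht
      _ ≤ _ := lintegral_mono' (Measure.restrict_mono Ioc_subset_Ioi_self le_rfl) le_rfl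
  have hint : ∫ t in Ioc (0:ℝ) T, (L - 2 * m * t) * t = L ^ 3 / (24 * m ^ 2) := by
    rw [← intervalIntegral.integral_of_le hT0.le]
    have hderiv : ∀ t ∈ uIcc (0:ℝ) T, HasDerivAt (fun t => L * t ^ 2 / 2 - 2 * m * t ^ 3 / 3)
        ((L - 2 * m * t) * t) t := by
      intro t _
      have h1 := (((hasDerivAt_pow 2 t).const_mul L).div_const 2).sub
        (((hasDerivAt_pow 3 t).const_mul (2 * m)).div_const 3)
      exact h1.congr_deriv (by rw [show (2:ℕ) - 1 = 1 from rfl, show (3:ℕ) - 1 = 2 from rfl]; push_cast; ring)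
    rw [intervalIntegral.integral_eq_sub_of_hasDerivAt hderiv
      (((continuous_const.sub (continuous_const.mul continuous_id)).mul continuous_id).intervalIntegrable _ _)]
    simp only [hT]
    field_simp
    ring
  have hofint : ENNReal.ofReal (L ^ 3 / (24 * m ^ 2)) =
      ∫⁻ t in Ioc (0:ℝ) T, ENNReal.ofReal ((L - 2 * m * t) * t) := by
    rw [← hint]
    refine ofReal_integral_eq_lintegral_ofReal ?_ ?_
    · exact ((continuous_const.sub (continuous_const.mul continuous_id)).mul continuous_id).integrableOn_Ioc
    · filter_upwards [self_mem_ae_restrict measurableSet_Ioc] with t ht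
      have hTle : t * (2 * m) ≤ L := (le_div_iff₀ (by positivity)).1 ht.2
      have : (0:ℝ) ≤ L - 2 * m * t := by nlinarith
      exact mul_nonneg this ht.1.le
  calc ENNReal.ofReal (L ^ 3 / (12 * m ^ 2))
      = ENNReal.ofReal 2 * ENNReal.ofReal (L ^ 3 / (24 * m ^ 2)) := by
        rw [← ENNReal.ofReal_mul (by norm_num)]
        congr 1; field_simp; ring
    _ ≤ ENNReal.ofReal 2 * ∫⁻ t in Ioi (0:ℝ), μ {a : ℝ | t < dmin γ hγ a} * ENNReal.ofReal (t ^ (2-1:ℝ)) := by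
        rw [hofint]
        exact mul_le_mul_of_nonneg_left step2 (by simp)

lemma cell_eq (n : ℕ) (hn : 1 ≤ n) (i : ℕ) (hi : i < n) (x : ℝ)
    (hx1 : (i : ℝ) / (2 * n) ≤ x) (hx2 : x ≤ ((i : ℝ) + 1) / (2 * n)) :
    (⨅ c : (Finset.image (fun i : ℕ => (2 * (i : ℝ) + 1) / (4 * n)) (Finset.range n)),
        (x - (c : ℝ)) ^ 2) = (x - (2 * (i : ℝ) + 1) / (4 * n)) ^ 2 := by
  have hN : (0:ℝ) < n := by exact_mod_cast Nat.lt_of_lt_of_le Nat.zero_lt_one hn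
  set γ := Finset.image (fun i : ℕ => (2 * (i : ℝ) + 1) / (4 * n)) (Finset.range n) with hγdef
  have hmemi : (2 * (i : ℝ) + 1) / (4 * n) ∈ γ :=
    Finset.mem_image_of_mem _ (Finset.mem_range.2 hi)
  have hne : γ.Nonempty := ⟨_, hmemi⟩
  have : Nonempty γ := hne.to_subtype
  refine le_antisymm (g_le γ hne x _ hmemi) (le_ciInf ?_)
  rintro ⟨c, hc⟩
  obtain ⟨j, hj, rfl⟩ := Finset.mem_image.1 hc
  rw [Finset.mem_range] at hj
  rw [← sq_abs (x - (2 * (i : ℝ) + 1) / (4 * n)), ← sq_abs (x - (2 * (j : ℝ) + 1) / (4 * n))]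
  apply pow_le_pow_left₀ (abs_nonneg _)
  set u : ℝ := x * (4 * n) with hu
  have hxu : x = u / (4 * n) := by field_simp; rw [hu]; ring
  have hA : (i : ℝ) ≤ x * (2 * n) := (div_le_iff₀ (by positivity)).1 hx1
  have hB : x * (2 * n) ≤ (i : ℝ) + 1 := (le_div_iff₀ (by positivity)).1 hx2
  have hu1 : 2 * (i : ℝ) ≤ u := by rw [hu]; nlinarith
  have hu2 : u ≤ 2 * (i : ℝ) + 2 := by rw [hu]; nlinarith
  rw [hxu, div_sub_div_same, div_sub_div_same, abs_div, abs_div,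
    abs_of_pos (by positivity : (0:ℝ) < 4 * n)]
  rw [div_le_div_iff_of_pos_right (by positivity : (0:ℝ) < 4 * n)]
  rcases lt_trichotomy j i with hji | hji | hji
  · have hc : (j : ℝ) + 1 ≤ i := by exact_mod_cast hji
    calc |u - (2 * (i:ℝ) + 1)| ≤ 1 := abs_le.2 ⟨by linarith, by linarith⟩
      _ ≤ |u - (2 * (j:ℝ) + 1)| := le_abs.2 (Or.inl (by linarith))
  · subst hji; exact le_rfl
  · have hc : (i : ℝ) + 1 ≤ j := by exact_mod_cast hji
    calc |u - (2 * (i:ℝ) + 1)| ≤ 1 := abs_le.2 ⟨by linarith, by linarith⟩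
      _ ≤ |u - (2 * (j:ℝ) + 1)| := le_abs.2 (Or.inr (by linarith))

lemma cell_integral (n : ℕ) (hn : 1 ≤ n) (i : ℕ) (hi : i < n) :
    ∫ x in ((i:ℝ)/(2*n))..(((i:ℝ)+1)/(2*n)),
      (⨅ c : (Finset.image (fun i : ℕ => (2 * (i : ℝ) + 1) / (4 * n)) (Finset.range n)),
        (x - (c : ℝ)) ^ 2) = 1 / (96 * (n:ℝ)^3) := by
  have hN : (0:ℝ) < n := by exact_mod_cast Nat.lt_of_lt_of_le Nat.zero_lt_one hn
  have hab : (i:ℝ)/(2*n) ≤ ((i:ℝ)+1)/(2*n) := by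
    rw [div_le_div_iff_of_pos_right (by positivity)]; linarith
  set c : ℝ := (2 * (i : ℝ) + 1) / (4 * n) with hc
  rw [intervalIntegral.integral_congr (g := fun x => (x - c) ^ 2) ?_]
  · have hder : ∀ x ∈ uIcc ((i:ℝ)/(2*n)) (((i:ℝ)+1)/(2*n)),
        HasDerivAt (fun y => (y - c) ^ 3 / 3) ((x - c) ^ 2) x := by
      intro x _
      have h := (((hasDerivAt_id x).sub_const c).pow 3).div_const 3
      exact h.congr_deriv (by rw [show (3:ℕ) - 1 = 2 from rfl]; simp only [id, mul_one]; push_cast; ring)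
    rw [intervalIntegral.integral_eq_sub_of_hasDerivAt hder
      (((continuous_id.sub continuous_const).pow 2).intervalIntegrable _ _)]
    rw [hc]
    have hn4 : (4:ℝ) * n ≠ 0 := by positivity
    field_simp
    ring
  · rw [uIcc_of_le hab]
    intro x hx
    exact cell_eq n hn i hi x hx.1 hx.2

lemma total_integral (n : ℕ) (hn : 1 ≤ n) :
    ∫ x in Icc (0:ℝ) (1/2),
      (⨅ c : (Finset.image (fun i : ℕ => (2 * (i : ℝ) + 1) / (4 * n)) (Finset.range n)),
        (x - (c : ℝ)) ^ 2) = 1 / (96 * (n:ℝ)^2) := by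
  have hN : (0:ℝ) < n := by exact_mod_cast Nat.lt_of_lt_of_le Nat.zero_lt_one hn
  set γ := Finset.image (fun i : ℕ => (2 * (i : ℝ) + 1) / (4 * n)) (Finset.range n) with hγdef
  have hne : γ.Nonempty := by
    refine Finset.Nonempty.image ?_ _
    exact Finset.nonempty_range_iff.2 (by omega)
  have hcont : Continuous (fun x : ℝ => ⨅ c : γ, (x - (c : ℝ)) ^ 2) := by
    have he : (fun x : ℝ => ⨅ c : γ, (x - (c : ℝ)) ^ 2) = fun x => dmin γ hne x ^ 2 :=
      funext (g_eq γ hne)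
    rw [he]
    exact (dmin_continuous γ hne).pow 2
  set a : ℕ → ℝ := fun k => (k : ℝ) / (2 * n) with ha
  have hsum := intervalIntegral.sum_integral_adjacent_intervals
    (a := a) (n := n) (μ := volume)
    (fun k _ => (hcont.intervalIntegrable _ _))
  have ha0 : a 0 = 0 := by simp [ha]
  have han : a n = 1/2 := by rw [ha]; field_simp
  have hIcc : ∫ x in Icc (0:ℝ) (1/2), (⨅ c : γ, (x - (c : ℝ)) ^ 2)
      = ∫ x in (a 0)..(a n), (⨅ c : γ, (x - (c : ℝ)) ^ 2) := by
    rw [ha0, han, intervalIntegral.integral_of_le (by norm_num),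
      MeasureTheory.integral_Icc_eq_integral_Ioc]
  rw [hIcc, ← hsum]
  have hcell : ∀ i ∈ Finset.range n,
      ∫ x in a i..a (i+1), (⨅ c : γ, (x - (c : ℝ)) ^ 2) = 1 / (96 * (n:ℝ)^3) := by
    intro i hi
    have := cell_integral n hn i (Finset.mem_range.1 hi)
    convert this using 2
    rw [ha]; push_cast; ring
  rw [Finset.sum_congr rfl hcell]
  simp only [Finset.sum_const, Finset.card_range, nsmul_eq_mul]
  field_simp

lemma distortion_unif_eq (γ : Finset ℝ) :
    distortion (unif 0 (1/2)) γ
      = 2 * ∫ x in Icc (0:ℝ) (1/2), (⨅ c : γ, (x - (c : ℝ)) ^ 2) := by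
  rw [distortion, unif, integral_smul_measure]
  norm_num [ENNReal.toReal_inv]

lemma distortion_lower (n : ℕ) (hn : 1 ≤ n) (γ : Finset ℝ) (hγ : γ.Nonempty)
    (hcard : γ.card ≤ n) :
    1 / (48 * (n:ℝ) ^ 2) ≤ distortion (unif 0 (1/2)) γ := by
  have hm1 : (1:ℝ) ≤ (γ.card : ℝ) := by
    simp only [Nat.one_le_cast]; exact Finset.card_pos.2 hγ
  have hm0 : (0:ℝ) < (γ.card : ℝ) := lt_of_lt_of_le one_pos hm1
  have hmn : (γ.card : ℝ) ≤ (n : ℝ) := by exact_mod_cast hcard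
  rw [distortion_unif_eq]
  set μ := volume.restrict (Icc (0:ℝ) (1/2)) with hμ
  have hgcont : Continuous (fun x : ℝ => ⨅ c : γ, (x - (c : ℝ)) ^ 2) := by
    have he : (fun x : ℝ => ⨅ c : γ, (x - (c : ℝ)) ^ 2) = fun x => dmin γ hγ x ^ 2 :=
      funext (g_eq γ hγ)
    rw [he]
    exact (dmin_continuous γ hγ).pow 2
  have hint : Integrable (fun x : ℝ => ⨅ c : γ, (x - (c : ℝ)) ^ 2) μ :=
    hgcont.integrableOn_Icc
  have hnn : 0 ≤ᵐ[μ] (fun x : ℝ => ⨅ c : γ, (x - (c : ℝ)) ^ 2) := by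
    refine Eventually.of_forall fun x => ?_
    simp only [Pi.zero_apply]
    rw [g_eq γ hγ]; positivity
  have heq : ∫ x, (⨅ c : γ, (x - (c : ℝ)) ^ 2) ∂μ
      = (∫⁻ x, ENNReal.ofReal (⨅ c : γ, (x - (c : ℝ)) ^ 2) ∂μ).toReal :=
    integral_eq_lintegral_of_nonneg_ae hnn hgcont.aestronglyMeasurable
  have hfin : ∫⁻ x, ENNReal.ofReal (⨅ c : γ, (x - (c : ℝ)) ^ 2) ∂μ ≠ ⊤ :=
    hint.lintegral_lt_top.ne
  have hkey : ENNReal.ofReal ((1/2:ℝ) ^ 3 / (12 * (γ.card : ℝ) ^ 2)) ≤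
      ∫⁻ x, ENNReal.ofReal (⨅ c : γ, (x - (c : ℝ)) ^ 2) ∂μ := by
    have := key_lower γ hγ (L := 1/2) (by norm_num)
    refine le_trans this (le_of_eq (lintegral_congr fun x => ?_))
    rw [g_eq γ hγ]
  have hlow : (1/2:ℝ) ^ 3 / (12 * (γ.card : ℝ) ^ 2)
      ≤ ∫ x, (⨅ c : γ, (x - (c : ℝ)) ^ 2) ∂μ := by
    rw [heq]
    have := ENNReal.toReal_mono hfin hkey
    rwa [ENNReal.toReal_ofReal (by positivity)] at this
  have hcmp : 1 / (48 * (n:ℝ)^2) ≤ 1 / (48 * (γ.card : ℝ)^2) := by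
    apply one_div_le_one_div_of_le (by positivity)
    nlinarith
  have : (1/2:ℝ) ^ 3 / (12 * (γ.card : ℝ) ^ 2) = (1/2) * (1 / (48 * (γ.card : ℝ)^2)) := by
    field_simp; ring
  nlinarith [hlow]

theorem stmt2 (n : ℕ) (hn : 1 ≤ n) :
    IsOptimalSet (unif 0 (1/2)) n
      (Finset.image (fun i : ℕ => (2 * (i : ℝ) + 1) / (4 * n)) (Finset.range n)) ∧
    quantErr (unif 0 (1/2)) n = 1 / (48 * n ^ 2) := by
  set γ₀ := Finset.image (fun i : ℕ => (2 * (i : ℝ) + 1) / (4 * n)) (Finset.range n) with hγ₀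
  have hne₀ : γ₀.Nonempty := by
    refine Finset.Nonempty.image ?_ _
    exact Finset.nonempty_range_iff.2 (by omega)
  have hcard₀ : γ₀.card ≤ n := le_trans Finset.card_image_le (by simp)
  have hupper : distortion (unif 0 (1/2)) γ₀ = 1 / (48 * (n:ℝ) ^ 2) := by
    rw [distortion_unif_eq, total_integral n hn]
    have hN : (0:ℝ) < n := by exact_mod_cast Nat.lt_of_lt_of_le Nat.zero_lt_one hn
    field_simp
    ring
  set S := {v : ℝ | ∃ γ : Finset ℝ, γ.Nonempty ∧ γ.card ≤ n ∧ v = distortion (unif 0 (1/2)) γ}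
    with hS
  have hmem : distortion (unif 0 (1/2)) γ₀ ∈ S := ⟨γ₀, hne₀, hcard₀, rfl⟩
  have hlb : ∀ v ∈ S, 1 / (48 * (n:ℝ) ^ 2) ≤ v := by
    rintro v ⟨γ, hγ, hcard, rfl⟩
    exact distortion_lower n hn γ hγ hcard
  have hq : quantErr (unif 0 (1/2)) n = 1 / (48 * (n:ℝ) ^ 2) := by
    rw [quantErr, ← hS]
    refine le_antisymm ?_ (le_csInf ⟨_, hmem⟩ hlb)
    calc sInf S ≤ distortion (unif 0 (1/2)) γ₀ :=
          csInf_le ⟨1 / (48 * (n:ℝ) ^ 2), hlb⟩ hmem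
      _ = _ := hupper
  exact ⟨⟨hne₀, hcard₀, by rw [hupper, hq]⟩, hq⟩
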